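/- A language L ⊆ 𝔸* is NOFRA-recognizable if and only if it is positive and NOFA-recognizable. -/

import Mathlib

abbrev Atom := ℕ

/-- A finite renaming. -/
def IsRenaming (ρ : Atom → Atom) : Prop := ({a | ρ a ≠ a} : Set Atom).Finite

/-- A language is positive if closed under letterwise application of all finite renamings. -/
def Positive (L : Set (List Atom)) : Prop :=
  ∀ ρ : Atom → Atom, IsRenaming ρ → ∀ w ∈ L, w.map ρ ∈ L

/-- The group `Perm(𝔸)` of finite permutations, as a subgroup of `Equiv.Perm 𝔸`. -/
def FinPerm : Subgroup (Equiv.Perm Atom) where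
  carrier := {π | ({a | π a ≠ a} : Set Atom).Finite}
  one_mem' := by
    have h : {a : Atom | (1 : Equiv.Perm Atom) a ≠ a} = ∅ := by ext a; simp
    show ({a : Atom | (1 : Equiv.Perm Atom) a ≠ a} : Set Atom).Finite
    rw [h]; exact Set.finite_empty
  mul_mem' := by
    intro π σ hπ hσ
    refine Set.Finite.subset (Set.Finite.union hπ hσ) ?_
    intro a ha
    simp only [Set.mem_setOf_eq, Set.mem_union] at *
    by_contra h
    push_neg at h
    exact ha (by rw [Equiv.Perm.mul_apply, h.2, h.1])
  inv_mem' := by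
    intro π hπ
    refine Set.Finite.subset hπ ?_
    intro a ha
    simp only [Set.mem_setOf_eq] at *
    intro h
    have h2 : π⁻¹ (π a) = π⁻¹ a := congrArg _ h
    rw [show π⁻¹ (π a) = a from π.symm_apply_apply a] at h2
    exact ha h2.symm

/-- The monoid `Fin(𝔸)` of finite renamings, as a submonoid of `Function.End 𝔸`. -/
def FinRen : Submonoid (Function.End Atom) where
  carrier := {ρ | ({a | ρ a ≠ a} : Set Atom).Finite}
  one_mem' := by
    have h : {a : Atom | (1 : Function.End Atom) a ≠ a} = ∅ := by
      ext a
      simp only [Set.mem_setOf_eq, Set.mem_empty_iff_false, iff_false, not_not]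
      rfl
    show ({a : Atom | (1 : Function.End Atom) a ≠ a} : Set Atom).Finite
    rw [h]; exact Set.finite_empty
  mul_mem' := by
    intro f g hf hg
    refine Set.Finite.subset (Set.Finite.union hf hg) ?_
    intro a ha
    simp only [Set.mem_setOf_eq, Set.mem_union] at *
    by_contra h
    push_neg at h
    exact ha (by show f (g a) = a; rw [h.2, h.1])

/-- Acceptance of a word from a state. -/
def Accepts {Q : Type*} (δ : Q → Atom → Q → Prop) (F : Set Q) : Q → List Atom → Prop
  | q, [] => q ∈ F
  | q, a :: w => ∃ q', δ q a q' ∧ Accepts δ F q' w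

/-- A nondeterministic orbit-finite nominal automaton (NOFA): an orbit-finite
nominal `Perm(𝔸)`-set of states together with equivariant transitions and
equivariant sets of initial and final states. -/
structure NOFA where
  Q : Type
  smul : FinPerm → Q → Q
  one_smul : ∀ q, smul 1 q = q
  mul_smul : ∀ π σ q, smul (π * σ) q = smul π (smul σ q)
  nominal : ∀ q : Q, ∃ S : Set Atom, S.Finite ∧
    ∀ π σ : FinPerm, (∀ a ∈ S, (π : Equiv.Perm Atom) a = (σ : Equiv.Perm Atom) a) →
      smul π q = smul σ q
  orbitFinite : Finite (Quot fun q q' : Q => ∃ π : FinPerm, smul π q = q')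
  δ : Q → Atom → Q → Prop
  I : Set Q
  F : Set Q
  equiv_δ : ∀ (π : FinPerm) q a q', δ q a q' →
    δ (smul π q) ((π : Equiv.Perm Atom) a) (smul π q')
  equiv_I : ∀ (π : FinPerm), ∀ q ∈ I, smul π q ∈ I
  equiv_F : ∀ (π : FinPerm), ∀ q ∈ F, smul π q ∈ F

/-- The language of a NOFA. -/
def NOFA.lang (A : NOFA) : Set (List Atom) :=
  {w | ∃ q₀ ∈ A.I, Accepts A.δ A.F q₀ w}

/-- A nondeterministic orbit-finite renaming automaton (NOFRA): the analogous
notion for the monoid `Fin(𝔸)` of finite renamings; orbit-finiteness is taken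
w.r.t. the underlying action of (finite) permutations, i.e. bijective renamings. -/
structure NOFRA where
  Q : Type
  smul : FinRen → Q → Q
  one_smul : ∀ q, smul 1 q = q
  mul_smul : ∀ ρ σ q, smul (ρ * σ) q = smul ρ (smul σ q)
  nominal : ∀ q : Q, ∃ S : Set Atom, S.Finite ∧
    ∀ ρ σ : FinRen, (∀ a ∈ S, (ρ : Function.End Atom) a = (σ : Function.End Atom) a) →
      smul ρ q = smul σ q
  orbitFinite : Finite (Quot fun q q' : Q =>
    ∃ ρ : FinRen, Function.Bijective (ρ : Function.End Atom) ∧ smul ρ q = q')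
  δ : Q → Atom → Q → Prop
  I : Set Q
  F : Set Q
  equiv_δ : ∀ (ρ : FinRen) q a q', δ q a q' →
    δ (smul ρ q) ((ρ : Function.End Atom) a) (smul ρ q')
  equiv_I : ∀ (ρ : FinRen), ∀ q ∈ I, smul ρ q ∈ I
  equiv_F : ∀ (ρ : FinRen), ∀ q ∈ F, smul ρ q ∈ F

/-- The language of a NOFRA. -/
def NOFRA.lang (A : NOFRA) : Set (List Atom) :=
  {w | ∃ q₀ ∈ A.I, Accepts A.δ A.F q₀ w}

section Aux

theorem Equiv.Perm.inv_apply_self {α : Type*} (f : Equiv.Perm α) (x : α) : f⁻¹ (f x) = x :=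
  f.symm_apply_apply x

theorem Equiv.Perm.apply_inv_self {α : Type*} (f : Equiv.Perm α) (x : α) : f (f⁻¹ x) = x :=
  f.apply_symm_apply x

lemma isRenaming_comp {f g : Atom → Atom} (hf : IsRenaming f) (hg : IsRenaming g) :
    IsRenaming (f ∘ g) := by
  refine Set.Finite.subset (hf.union hg) ?_
  intro a ha
  simp only [Set.mem_setOf_eq, Function.comp_apply, Set.mem_union] at *
  by_contra h; push_neg at h; exact ha (by rw [h.2, h.1])

lemma finPerm_isRenaming (π : FinPerm) : IsRenaming (⇑π.1) := π.2

lemma finRen_isRenaming (ρ : FinRen) : IsRenaming (ρ.1 : Atom → Atom) := ρ.2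

lemma isRenaming_inv (π : FinPerm) : IsRenaming (⇑π.1⁻¹) := (π⁻¹ : FinPerm).2

def pEmb (π : FinPerm) : FinRen := ⟨(⇑π.1 : Atom → Atom), π.2⟩

@[simp] lemma pEmb_apply (π : FinPerm) (a : Atom) : (pEmb π).1 a = π.1 a := rfl

lemma pEmb_one : pEmb 1 = 1 := rfl

lemma pEmb_mul (π σ : FinPerm) : pEmb (π * σ) = pEmb π * pEmb σ := rfl

lemma pEmb_bijective (π : FinPerm) : Function.Bijective ((pEmb π).1 : Atom → Atom) :=
  π.1.bijective

lemma finRen_mul_apply (ρ σ : FinRen) (a : Atom) : (ρ * σ).1 a = ρ.1 (σ.1 a) := rfl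

lemma finRen_one_apply (a : Atom) : (1 : FinRen).1 a = a := rfl

lemma swap_mem_finPerm (a b : Atom) : Equiv.swap a b ∈ FinPerm := by
  show ({x | Equiv.swap a b x ≠ x} : Set Atom).Finite
  refine Set.Finite.subset (Set.toFinite ({a, b} : Set Atom)) ?_
  intro x hx
  simp only [Set.mem_setOf_eq] at hx
  by_contra hmem
  simp only [Set.mem_insert_iff, Set.mem_singleton_iff] at hmem
  push_neg at hmem
  exact hx (Equiv.swap_apply_of_ne_of_ne hmem.1 hmem.2)

end Aux

section ActionA

variable (A : NOFA)

/-- `S` supports the state `q` of the NOFA `A`. -/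
def Supp (S : Set Atom) (q : A.Q) : Prop :=
  ∀ π σ : FinPerm, (∀ a ∈ S, π.1 a = σ.1 a) → A.smul π q = A.smul σ q

variable {A}

lemma nsmul_inv_smul (π : FinPerm) (q : A.Q) : A.smul π⁻¹ (A.smul π q) = q := by
  rw [← A.mul_smul, inv_mul_cancel, A.one_smul]

lemma nsmul_smul_inv (π : FinPerm) (q : A.Q) : A.smul π (A.smul π⁻¹ q) = q := by
  rw [← A.mul_smul, mul_inv_cancel, A.one_smul]

lemma Supp.mono {S T : Set Atom} {q : A.Q} (h : Supp A S q) (hst : S ⊆ T) : Supp A T q :=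
  fun π σ hag => h π σ (fun a ha => hag a (hst ha))

lemma Supp.fix {S : Set Atom} {q : A.Q} (h : Supp A S q) {π : FinPerm}
    (hπ : ∀ a ∈ S, π.1 a = a) : A.smul π q = q := by
  have := h π 1 (by intro a ha; simpa using hπ a ha)
  rwa [A.one_smul] at this

lemma Supp.smul {S : Set Atom} {q : A.Q} (h : Supp A S q) (π : FinPerm) :
    Supp A (π.1 '' S) (A.smul π q) := by
  intro π₁ π₂ hag
  rw [← A.mul_smul, ← A.mul_smul]
  exact h (π₁ * π) (π₂ * π) (fun a ha => hag (π.1 a) ⟨a, ha, rfl⟩)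

lemma supp_of_nominal (q : A.Q) : ∃ S : Set Atom, S.Finite ∧ Supp A S q := by
  obtain ⟨S, hfin, hS⟩ := A.nominal q
  exact ⟨S, hfin, fun π σ h => hS π σ h⟩

/-- chosen finite support -/
noncomputable def SOF (q : A.Q) : Set Atom := (supp_of_nominal q).choose

lemma SOF_finite (q : A.Q) : (SOF q : Set Atom).Finite := (supp_of_nominal q).choose_spec.1

lemma SOF_supp (q : A.Q) : Supp A (SOF q) q := (supp_of_nominal q).choose_spec.2

end ActionA

section Inter

variable {A : NOFA}

/-- fresh atom outside a finite set -/
lemma exists_fresh (Z : Set Atom) (hZ : Z.Finite) : ∃ c : Atom, c ∉ Z := by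
  have : Zᶜ.Infinite := Set.Finite.infinite_compl hZ
  obtain ⟨c, hc⟩ := this.nonempty
  exact ⟨c, hc⟩

lemma swap_decomp (a b c : Atom) (hab : a ≠ b) (hca : c ≠ a) (hcb : c ≠ b) :
    Equiv.swap a b = Equiv.swap a c * Equiv.swap b c * Equiv.swap a c := by
  ext x
  simp only [Equiv.Perm.mul_apply, Equiv.swap_apply_def]
  split_ifs <;> simp_all

/-- a swap of two atoms at least one of which avoids each support fixes the state -/
lemma supp_swap {S₁ S₂ : Set Atom} {q : A.Q} (h₁ : Supp A S₁ q) (h₂ : Supp A S₂ q)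
    (f₁ : S₁.Finite) (f₂ : S₂.Finite) {a b : Atom}
    (ha : a ∉ S₁ ∩ S₂) (hb : b ∉ S₁ ∩ S₂) :
    A.smul ⟨Equiv.swap a b, swap_mem_finPerm a b⟩ q = q := by
  have key : ∀ (x y : Atom), x ∉ S₁ → y ∉ S₂ →
      A.smul ⟨Equiv.swap x y, swap_mem_finPerm x y⟩ q = q := by
    intro x y hx hy
    rcases eq_or_ne x y with rfl | hxy
    · have : (⟨Equiv.swap x x, swap_mem_finPerm x x⟩ : FinPerm) = 1 := by
        apply Subtype.ext; simp [Equiv.swap_self]; rfl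
      rw [this, A.one_smul]
    obtain ⟨c, hc⟩ := exists_fresh (S₁ ∪ S₂ ∪ {x, y}) ((f₁.union f₂).union (Set.toFinite _))
    simp only [Set.mem_union, Set.mem_insert_iff, Set.mem_singleton_iff, not_or] at hc
    obtain ⟨⟨hc₁, hc₂⟩, hcx, hcy⟩ := hc
    have hxc : A.smul ⟨Equiv.swap x c, swap_mem_finPerm x c⟩ q = q := by
      refine Supp.fix h₁ ?_
      intro d hd
      exact Equiv.swap_apply_of_ne_of_ne (fun h => hx (h ▸ hd)) (fun h => hc₁ (h ▸ hd))
    have hyc : A.smul ⟨Equiv.swap y c, swap_mem_finPerm y c⟩ q = q := by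
      refine Supp.fix h₂ ?_
      intro d hd
      exact Equiv.swap_apply_of_ne_of_ne (fun h => hy (h ▸ hd)) (fun h => hc₂ (h ▸ hd))
    have hdec : (⟨Equiv.swap x y, swap_mem_finPerm x y⟩ : FinPerm) =
        ⟨Equiv.swap x c, swap_mem_finPerm x c⟩ * ⟨Equiv.swap y c, swap_mem_finPerm y c⟩ *
          ⟨Equiv.swap x c, swap_mem_finPerm x c⟩ := by
      apply Subtype.ext
      exact swap_decomp x y c hxy hcx hcy
    rw [hdec, A.mul_smul, A.mul_smul, hxc, hyc, hxc]
  by_cases ha1 : a ∈ S₁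
  · have ha2 : a ∉ S₂ := fun h => ha ⟨ha1, h⟩
    by_cases hb1 : b ∈ S₁
    · have hb2 : b ∉ S₂ := fun h => hb ⟨hb1, h⟩
      -- a, b ∉ S₂ : swap fixes S₂ pointwise
      refine Supp.fix h₂ ?_
      intro d hd
      exact Equiv.swap_apply_of_ne_of_ne (fun h => ha2 (h ▸ hd)) (fun h => hb2 (h ▸ hd))
    · -- b ∉ S₁, a ∉ S₂ : use key with (b, a)
      have : A.smul ⟨Equiv.swap b a, swap_mem_finPerm b a⟩ q = q := key b a hb1 ha2
      have hswap : (⟨Equiv.swap a b, swap_mem_finPerm a b⟩ : FinPerm) =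
          ⟨Equiv.swap b a, swap_mem_finPerm b a⟩ := Subtype.ext (Equiv.swap_comm a b)
      rw [hswap]; exact this
  · by_cases hb2 : b ∈ S₂
    · have hb1 : b ∉ S₁ := fun h => hb ⟨h, hb2⟩
      refine Supp.fix h₁ ?_
      intro d hd
      exact Equiv.swap_apply_of_ne_of_ne (fun h => ha1 (h ▸ hd)) (fun h => hb1 (h ▸ hd))
    · exact key a b ha1 hb2

lemma supp_fix_inter {S₁ S₂ : Set Atom} {q : A.Q} (h₁ : Supp A S₁ q) (h₂ : Supp A S₂ q)
    (f₁ : S₁.Finite) (f₂ : S₂.Finite) :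
    ∀ (n : ℕ) (π : FinPerm), (π.2 : ({a | π.1 a ≠ a} : Set Atom).Finite).toFinset.card ≤ n →
      (∀ a ∈ S₁ ∩ S₂, π.1 a = a) → A.smul π q = q := by
  intro n
  induction n with
  | zero =>
    intro π hcard _
    have hempty : ∀ x, π.1 x = x := by
      intro x
      by_contra hx
      have : x ∈ (π.2 : ({a | π.1 a ≠ a} : Set Atom).Finite).toFinset := by
        exact (Set.Finite.mem_toFinset _).mpr hx
      have := Finset.card_pos.mpr ⟨x, this⟩
      omega
    have : π = 1 := Subtype.ext (Equiv.ext hempty)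
    rw [this, A.one_smul]
  | succ n ih =>
    intro π hcard hfix
    by_cases hid : ∀ x, π.1 x = x
    · have : π = 1 := Subtype.ext (Equiv.ext hid)
      rw [this, A.one_smul]
    · push_neg at hid
      obtain ⟨a, ha⟩ := hid
      set b := π.1 a with hb
      have hab : a ≠ b := fun h => ha h.symm
      have haT : a ∉ S₁ ∩ S₂ := fun h => ha (hfix a h)
      have hbT : b ∉ S₁ ∩ S₂ := by
        intro h
        have : π.1 b = b := hfix b h
        have : a = b := π.1.injective (by rw [this, ← hb])
        exact hab this
      set s : FinPerm := ⟨Equiv.swap a b, swap_mem_finPerm a b⟩ with hs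
      set π' : FinPerm := s * π with hπ'
      have hπeq : π = s * π' := by
        rw [hπ', ← mul_assoc]
        have : s * s = 1 := Subtype.ext (Equiv.swap_mul_self a b)
        rw [this, one_mul]
      have hπ'a : π'.1 a = a := by
        show Equiv.swap a b (π.1 a) = a
        rw [← hb, Equiv.swap_apply_right]
      have hmoved : ∀ x, π'.1 x ≠ x → (π.1 x ≠ x ∧ x ≠ a) := by
        intro x hx
        refine ⟨?_, ?_⟩
        · intro hpx
          apply hx
          show Equiv.swap a b (π.1 x) = x
          rw [hpx]
          have hxa : x ≠ a := fun h => ha (by subst h; exact hpx)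
          have hxb : x ≠ b := by
            intro h
            have hpb : π.1 b = b := by rw [← h]; exact hpx
            have h2 : π.1 a = π.1 b := by rw [hpb, ← hb]
            exact hab (π.1.injective h2)
          exact Equiv.swap_apply_of_ne_of_ne hxa hxb
        · intro h; subst h; exact hx hπ'a
      -- card decreases
      have hsubset : (π'.2 : ({x | π'.1 x ≠ x} : Set Atom).Finite).toFinset ⊆
          (π.2 : ({x | π.1 x ≠ x} : Set Atom).Finite).toFinset := by
        intro x hx
        exact (Set.Finite.mem_toFinset _).mpr (hmoved x ((Set.Finite.mem_toFinset _).mp hx)).1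
      have hstrict : (π'.2 : ({x | π'.1 x ≠ x} : Set Atom).Finite).toFinset ⊂
          (π.2 : ({x | π.1 x ≠ x} : Set Atom).Finite).toFinset := by
        refine Finset.ssubset_iff_of_subset hsubset |>.mpr ?_
        refine ⟨a, ?_, ?_⟩
        · exact (Set.Finite.mem_toFinset _).mpr ha
        · exact fun h => (Set.Finite.mem_toFinset _).mp h hπ'a
      have hcard' : (π'.2 : ({x | π'.1 x ≠ x} : Set Atom).Finite).toFinset.card ≤ n := by
        have := Finset.card_lt_card hstrict
        omega
      have hfix' : ∀ x ∈ S₁ ∩ S₂, π'.1 x = x := by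
        intro x hx
        by_contra h
        exact (hmoved x h).1 (hfix x hx) |>.elim
      rw [hπeq, A.mul_smul, ih π' hcard' hfix']
      exact supp_swap h₁ h₂ f₁ f₂ haT hbT

/-- intersection of two finite supports is a support -/
lemma supp_inter {S₁ S₂ : Set Atom} {q : A.Q} (h₁ : Supp A S₁ q) (h₂ : Supp A S₂ q)
    (f₁ : S₁.Finite) (f₂ : S₂.Finite) : Supp A (S₁ ∩ S₂) q := by
  intro π σ hag
  have key : ∀ a ∈ S₁ ∩ S₂, (σ⁻¹ * π).1 a = a := by
    intro a ha
    show σ.1⁻¹ (π.1 a) = a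
    rw [hag a ha]
    exact Equiv.Perm.inv_apply_self σ.1 a
  have h := supp_fix_inter h₁ h₂ f₁ f₂
    ((σ⁻¹ * π).2 : ({x | (σ⁻¹ * π).1 x ≠ x} : Set Atom).Finite).toFinset.card
    (σ⁻¹ * π) le_rfl key
  calc A.smul π q = A.smul (σ * (σ⁻¹ * π)) q := by rw [← mul_assoc, mul_inv_cancel, one_mul]
    _ = A.smul σ (A.smul (σ⁻¹ * π) q) := A.mul_smul _ _ _
    _ = A.smul σ q := by rw [h]

end Inter

section Extend

/-- Any injection on a finite set extends to a finite permutation. -/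
lemma exists_finperm_extend (V : Finset Atom) (j : Atom → Atom)
    (hj : Set.InjOn j (V : Set Atom)) :
    ∃ π : FinPerm, ∀ a ∈ V, π.1 a = j a := by
  classical
  set W : Finset Atom := V ∪ V.image j with hW
  have hVW : V ⊆ W := Finset.subset_union_left
  have hJW : V.image j ⊆ W := Finset.subset_union_right
  have hcards : (W \ V).card = (W \ V.image j).card := by
    rw [Finset.card_sdiff_of_subset hVW, Finset.card_sdiff_of_subset hJW, Finset.card_image_of_injOn hj]
  set e := Finset.equivOfCardEq hcards with he
  set g : Atom → Atom := fun x =>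
    if hx : x ∈ V then j x else if hx' : x ∈ W \ V then (e ⟨x, hx'⟩ : Atom) else x with hg
  have hgV : ∀ a ∈ V, g a = j a := by intro a ha; simp only [hg]; rw [dif_pos ha]
  have hgW : ∀ a (ha : a ∈ W \ V), g a = (e ⟨a, ha⟩ : Atom) := by
    intro a ha
    have ha' : a ∉ V := (Finset.mem_sdiff.mp ha).2
    simp only [hg]; rw [dif_neg ha', dif_pos ha]
  have hgO : ∀ a, a ∉ W → g a = a := by
    intro a ha
    have h1 : a ∉ V := fun h => ha (hVW h)
    have h2 : a ∉ W \ V := fun h => ha (Finset.mem_sdiff.mp h).1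
    simp only [hg]; rw [dif_neg h1, dif_neg h2]
  -- ranges
  have hr1 : ∀ a ∈ V, g a ∈ V.image j := by
    intro a ha; rw [hgV a ha]; exact Finset.mem_image_of_mem j ha
  have hr2 : ∀ a (ha : a ∈ W \ V), g a ∈ W \ V.image j := by
    intro a ha; rw [hgW a ha]; exact (e ⟨a, ha⟩).2
  have hinj : Function.Injective g := by
    intro x y hxy
    by_cases hxV : x ∈ V <;> by_cases hyV : y ∈ V
    · exact hj hxV hyV (by rwa [hgV x hxV, hgV y hyV] at hxy)
    · exfalso
      by_cases hyW : y ∈ W \ V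
      · have := hr2 y hyW
        rw [← hxy] at this
        exact (Finset.mem_sdiff.mp this).2 (hr1 x hxV)
      · have hy : g y = y := hgO y (by
          intro h; exact hyW (Finset.mem_sdiff.mpr ⟨h, hyV⟩))
        rw [hy] at hxy
        have : y ∈ W := hJW (hxy ▸ hr1 x hxV)
        exact hyW (Finset.mem_sdiff.mpr ⟨this, hyV⟩)
    · exfalso
      by_cases hxW : x ∈ W \ V
      · have := hr2 x hxW
        rw [hxy] at this
        exact (Finset.mem_sdiff.mp this).2 (hr1 y hyV)
      · have hx : g x = x := hgO x (by
          intro h; exact hxW (Finset.mem_sdiff.mpr ⟨h, hxV⟩))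
        rw [hx] at hxy
        have : x ∈ W := hJW (hxy ▸ (hr1 y hyV))
        exact hxW (Finset.mem_sdiff.mpr ⟨this, hxV⟩)
    · by_cases hxW : x ∈ W \ V <;> by_cases hyW : y ∈ W \ V
      · have := (Finset.equivOfCardEq hcards).injective (a₁ := ⟨x, hxW⟩) (a₂ := ⟨y, hyW⟩)
        have hx := hgW x hxW; have hy := hgW y hyW
        have : (⟨x, hxW⟩ : {z // z ∈ W \ V}) = ⟨y, hyW⟩ := by
          apply e.injective
          apply Subtype.ext
          rw [← hgW x hxW, ← hgW y hyW]; exact hxy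
        exact congrArg Subtype.val this
      · exfalso
        have h1 := hr2 x hxW
        have hy : g y = y := hgO y (fun h => hyW (Finset.mem_sdiff.mpr ⟨h, hyV⟩))
        rw [hxy, hy] at h1
        exact hyW (Finset.mem_sdiff.mpr ⟨(Finset.mem_sdiff.mp h1).1, hyV⟩)
      · exfalso
        have h1 := hr2 y hyW
        have hx : g x = x := hgO x (fun h => hxW (Finset.mem_sdiff.mpr ⟨h, hxV⟩))
        rw [← hxy, hx] at h1
        exact hxW (Finset.mem_sdiff.mpr ⟨(Finset.mem_sdiff.mp h1).1, hxV⟩)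
      · have hx : g x = x := hgO x (fun h => hxW (Finset.mem_sdiff.mpr ⟨h, hxV⟩))
        have hy : g y = y := hgO y (fun h => hyW (Finset.mem_sdiff.mpr ⟨h, hyV⟩))
        rw [hx, hy] at hxy; exact hxy
  have hsurj : Function.Surjective g := by
    intro y
    by_cases hyJ : y ∈ V.image j
    · obtain ⟨x, hx, hxy⟩ := Finset.mem_image.mp hyJ
      exact ⟨x, by rw [hgV x hx]; exact hxy⟩
    · by_cases hyW : y ∈ W
      · have hyWJ : y ∈ W \ V.image j := Finset.mem_sdiff.mpr ⟨hyW, hyJ⟩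
        obtain ⟨x, hx⟩ : ∃ x : {z // z ∈ W \ V}, e x = ⟨y, hyWJ⟩ := ⟨e.symm _, e.apply_symm_apply _⟩
        refine ⟨x.1, ?_⟩
        rw [hgW x.1 x.2]
        have : (⟨x.1, x.2⟩ : {z // z ∈ W \ V}) = x := rfl
        rw [this, hx]
      · exact ⟨y, hgO y hyW⟩
  have hbij : Function.Bijective g := ⟨hinj, hsurj⟩
  have hmem : Equiv.ofBijective g hbij ∈ FinPerm := by
    show ({a | g a ≠ a} : Set Atom).Finite
    refine Set.Finite.subset W.finite_toSet ?_
    intro a ha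
    by_contra h
    exact ha (hgO a h)
  exact ⟨⟨Equiv.ofBijective g hbij, hmem⟩, fun a ha => hgV a ha⟩

end Extend

section AcceptsEquiv

lemma accepts_smul_nofa (A : NOFA) (π : FinPerm) :
    ∀ (v : List Atom) (q : A.Q), Accepts A.δ A.F q v →
      Accepts A.δ A.F (A.smul π q) (v.map π.1) := by
  intro v
  induction v with
  | nil => intro q h; exact A.equiv_F π q h
  | cons a w ih =>
    intro q h
    obtain ⟨q', hδ, hacc⟩ := h
    exact ⟨A.smul π q', A.equiv_δ π q a q' hδ, ih q' hacc⟩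

lemma accepts_smul_nofra (A : NOFRA) (ρ : FinRen) :
    ∀ (v : List Atom) (q : A.Q), Accepts A.δ A.F q v →
      Accepts A.δ A.F (A.smul ρ q) (v.map ρ.1) := by
  intro v
  induction v with
  | nil => intro q h; exact A.equiv_F ρ q h
  | cons a w ih =>
    intro q h
    obtain ⟨q', hδ, hacc⟩ := h
    exact ⟨A.smul ρ q', A.equiv_δ ρ q a q' hδ, ih q' hacc⟩

end AcceptsEquiv

section Normalize

variable {A : NOFA}

/-- Run normalization: any accepted word can be replaced by one whose letters are
either in the given support or fresh w.r.t. a given finite bad set, such that a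
renaming fixing the support and the bad set maps it back. -/
lemma normalizeRun :
    ∀ (v : List Atom) (q : A.Q) (S Z : Set Atom), Accepts A.δ A.F q v → S.Finite →
      Supp A S q → Z.Finite →
      ∃ (v' : List Atom) (g : Atom → Atom), IsRenaming g ∧ Accepts A.δ A.F q v' ∧
        v'.map g = v ∧ (∀ a ∈ S ∪ Z, g a = a) ∧ (∀ c ∈ v', c ∈ S ∨ c ∉ Z) := by
  intro v
  induction v with
  | nil =>
    intro q S Z hacc _ _ _
    refine ⟨[], id, ?_, hacc, rfl, fun a _ => rfl, by simp⟩
    show ({a | id a ≠ a} : Set Atom).Finite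
    simp
  | cons b v₁ ih =>
    intro q S Z hacc hSfin hSsupp hZfin
    classical
    obtain ⟨q₁, hδ, hacc₁⟩ := hacc
    have hS₁fin : (SOF q₁ : Set Atom).Finite := SOF_finite q₁
    have hS₁supp : Supp A (SOF q₁) q₁ := SOF_supp q₁
    set S₁ : Set Atom := SOF q₁ with hS₁def
    set Big : Finset Atom := hSfin.toFinset ∪ hZfin.toFinset ∪ hS₁fin.toFinset ∪ {b}
      with hBigdef
    obtain ⟨M, hBig⟩ : ∃ M : Atom, ∀ a ∈ Big, a < M :=
      ⟨Big.sup id + 1, fun a ha => Nat.lt_succ_of_le (Finset.le_sup (f := id) ha)⟩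
    have hSBig : ∀ a ∈ S, a ∈ Big := by
      intro a ha
      simp only [hBigdef, Finset.mem_union]
      exact Or.inl (Or.inl (Or.inl (hSfin.mem_toFinset.mpr ha)))
    have hZBig : ∀ a ∈ Z, a ∈ Big := by
      intro a ha
      simp only [hBigdef, Finset.mem_union]
      exact Or.inl (Or.inl (Or.inr (hZfin.mem_toFinset.mpr ha)))
    have hfresh : ∀ x y, y ∈ Big → y ≠ x + M := by
      intro x y hy h
      have h2 := hBig y hy
      exact Nat.ne_of_lt (Nat.lt_of_lt_of_le h2 (Nat.le_add_left M x)) h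
    set V : Finset Atom := hSfin.toFinset ∪ hS₁fin.toFinset ∪ {b} with hVdef
    set j : Atom → Atom := fun a => if a ∈ S then a else a + M with hjdef
    have hjinj : Set.InjOn j (V : Set Atom) := by
      intro a ha a' ha' heq
      simp only [hjdef] at heq
      by_cases h1 : a ∈ S <;> by_cases h2 : a' ∈ S
      · rwa [if_pos h1, if_pos h2] at heq
      · rw [if_pos h1, if_neg h2] at heq
        exact absurd heq (hfresh a' a (hSBig a h1))
      · rw [if_neg h1, if_pos h2] at heq
        exact absurd heq.symm (hfresh a a' (hSBig a' h2))
      · rw [if_neg h1, if_neg h2] at heq; exact Nat.add_right_cancel heq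
    obtain ⟨π, hπ⟩ := exists_finperm_extend V j hjinj
    have hbV : b ∈ V := by
      simp only [hVdef, Finset.mem_union, Finset.mem_singleton]
      tauto
    have hSV : ∀ a ∈ S, a ∈ V := by
      intro a ha
      simp only [hVdef, Finset.mem_union]
      exact Or.inl (Or.inl (hSfin.mem_toFinset.mpr ha))
    have hS₁V : ∀ a ∈ S₁, a ∈ V := by
      intro a ha
      simp only [hVdef, Finset.mem_union]
      exact Or.inl (Or.inr (hS₁fin.mem_toFinset.mpr ha))
    have hπS : ∀ a ∈ S, π.1 a = a := by
      intro a ha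
      rw [hπ a (hSV a ha)]
      simp only [hjdef]
      rw [if_pos ha]
    have hπq : A.smul π q = q := Supp.fix hSsupp hπS
    have hδ2 : A.δ q (π.1 b) (A.smul π q₁) := by
      have := A.equiv_δ π q b q₁ hδ
      rwa [hπq] at this
    -- apply the IH and push forward along π
    obtain ⟨ww1, g₁, hg₁ren, hacc₂, hmap₁, hfix₁, hlet₁⟩ :=
      ih q₁ S₁ (⇑(π.1⁻¹) '' (Z ∪ S ∪ {π.1 b})) hacc₁ hS₁fin hS₁supp
        (((hZfin.union hSfin).union (Set.finite_singleton _)).image _)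
    set Zh : Set Atom := Z ∪ S ∪ {π.1 b} with hZhdef
    set wwp : List Atom := ww1.map π.1 with hwwpdef
    have hacc' : Accepts A.δ A.F (A.smul π q₁) wwp := accepts_smul_nofa A π ww1 q₁ hacc₂
    set gg : Atom → Atom := fun a => π.1 (g₁ (π.1⁻¹ a)) with hggdef
    have hggmap : wwp.map gg = v₁.map π.1 := by
      simp only [hwwpdef, List.map_map]
      have : gg ∘ ⇑π.1 = ⇑π.1 ∘ g₁ := by
        funext a
        simp only [Function.comp_apply, hggdef, Equiv.Perm.inv_apply_self]
      rw [this, ← List.map_map, hmap₁]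
    have hggfix : ∀ a, a ∈ (⇑π.1 '' S₁) ∪ Zh → gg a = a := by
      intro a ha
      have hmem : π.1⁻¹ a ∈ S₁ ∪ (⇑(π.1⁻¹) '' Zh) := by
        rcases ha with ⟨d, hd, rfl⟩ | ha
        · left; rwa [Equiv.Perm.inv_apply_self]
        · right; exact ⟨a, ha, rfl⟩
      simp only [hggdef]
      rw [hfix₁ _ hmem, Equiv.Perm.apply_inv_self]
    have hlet' : ∀ c ∈ wwp, c ∈ (⇑π.1 '' S₁) ∨ c ∉ Zh := by
      intro c hc
      simp only [hwwpdef, List.mem_map] at hc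
      obtain ⟨d, hd, rfl⟩ := hc
      rcases hlet₁ d hd with hd1 | hd1
      · exact Or.inl ⟨d, hd1, rfl⟩
      · right
        intro hmem
        exact hd1 ⟨π.1 d, hmem, by rw [Equiv.Perm.inv_apply_self]⟩
    -- assembly
    set g : Atom → Atom := fun a =>
      if a = π.1 b then b else if a ∈ wwp then π.1⁻¹ (gg a) else a with hgdef
    have hπbZh : (π.1 b : Atom) ∈ Zh := by
      simp only [hZhdef]; right; rfl
    have hgb : g (π.1 b) = b := by simp only [hgdef, if_pos rfl]
    have hgletters : ∀ c ∈ wwp, g c = π.1⁻¹ (gg c) := by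
      intro c hc
      by_cases hcb : c = π.1 b
      · subst hcb
        rw [hgb, hggfix _ (Or.inr hπbZh), Equiv.Perm.inv_apply_self]
      · simp only [hgdef]
        rw [if_neg hcb, if_pos hc]
    have hπbform : π.1 b = j b := hπ b hbV
    refine ⟨π.1 b :: wwp, g, ?_, ⟨A.smul π q₁, hδ2, hacc'⟩, ?_, ?_, ?_⟩
    · -- IsRenaming g
      show ({a | g a ≠ a} : Set Atom).Finite
      refine Set.Finite.subset ((Set.finite_singleton (π.1 b)).union wwp.finite_toSet) ?_
      intro a ha
      simp only [Set.mem_setOf_eq] at ha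
      by_contra hmem
      simp only [Set.mem_union, Set.mem_singleton_iff, Set.mem_setOf_eq, List.mem_toFinset]
        at hmem
      push_neg at hmem
      apply ha
      simp only [hgdef]
      rw [if_neg hmem.1, if_neg hmem.2]
    · -- maps back
      simp only [List.map_cons, hgb]
      congr 1
      calc List.map g wwp
          = List.map (fun a => π.1⁻¹ (gg a)) wwp := List.map_congr_left hgletters
        _ = List.map ⇑π.1⁻¹ (List.map gg wwp) := by simp [List.map_map, Function.comp]
        _ = List.map ⇑π.1⁻¹ (List.map ⇑π.1 v₁) := by rw [hggmap]
        _ = v₁ := by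
            rw [List.map_map]
            have : ⇑π.1⁻¹ ∘ ⇑π.1 = id := by funext a; simp
            rw [this, List.map_id]
    · -- fixes S ∪ Z
      intro a ha
      have haBig : a ∈ Big := by rcases ha with h | h; exact hSBig a h; exact hZBig a h
      by_cases hab : a = π.1 b
      · -- then b ∈ S and π b = b
        by_cases hbS : b ∈ S
        · rw [hab, hgb]
          exact (hπS b hbS).symm
        · exfalso
          rw [hπbform] at hab
          simp only [hjdef] at hab
          rw [if_neg hbS] at hab
          exact hfresh b a haBig hab
      · by_cases hav : a ∈ wwp
        · rw [hgletters a hav]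
          rcases hlet' a hav with ⟨d, hd, rfl⟩ | hno
          · have hdS : d ∈ S := by
              by_contra hdS
              have h3 : π.1 d = d + M := by rw [hπ d (hS₁V d hd), hjdef]; exact if_neg hdS
              rw [h3] at haBig
              exact hfresh d _ haBig rfl
            rw [hggfix _ (Or.inl ⟨d, hd, rfl⟩), Equiv.Perm.inv_apply_self]
            exact (hπS d hdS).symm
          · exfalso
            apply hno
            simp only [hZhdef]
            rcases ha with h | h
            · exact Or.inl (Or.inr h)
            · exact Or.inl (Or.inl h)
        · simp only [hgdef]
          rw [if_neg hab, if_neg hav]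
    · -- letters are in S or fresh
      intro c hc
      rcases List.mem_cons.mp hc with rfl | hc
      · by_cases hbS : b ∈ S
        · left; rw [hπS b hbS]; exact hbS
        · right
          rw [hπbform]
          simp only [hjdef]
          rw [if_neg hbS]
          intro hmem
          exact hfresh b _ (hZBig _ hmem) rfl
      · rcases hlet' c hc with ⟨d, hd, rfl⟩ | hno
        · by_cases hdS : d ∈ S
          · left; rw [hπS d hdS]; exact hdS
          · right
            have : π.1 d = d + M := by rw [hπ d (hS₁V d hd), hjdef]; exact if_neg hdS
            rw [this]
            intro hmem
            exact hfresh d _ (hZBig _ hmem) rfl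
        · right; intro hmem; exact hno (by simp only [hZhdef]; exact Or.inl (Or.inl hmem))

end Normalize

section Construction

variable (A : NOFA)

/-- the identification relation on `FinRen × A.Q` -/
def Rel0 (p p' : FinRen × A.Q) : Prop :=
  ∃ π : FinPerm, p'.2 = A.smul π p.2 ∧ ∀ a ∈ SOF p.2, p.1.1 a = p'.1.1 (π.1 a)

/-- states of the constructed NOFRA -/
def QB := Quot (Rel0 A)

def smulB (ρ : FinRen) : QB A → QB A :=
  Quot.map (fun p => (ρ * p.1, p.2)) (by
    rintro ⟨ρ₁, q₁⟩ ⟨ρ₂, q₂⟩ ⟨π, hq, hag⟩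
    refine ⟨π, hq, fun a ha => ?_⟩
    show ρ.1 (ρ₁.1 a) = ρ.1 (ρ₂.1 (π.1 a))
    rw [hag a ha])

lemma smulB_mk (ρ : FinRen) (p : FinRen × A.Q) :
    smulB A ρ (Quot.mk _ p) = Quot.mk _ (ρ * p.1, p.2) := rfl

def δB : QB A → Atom → QB A → Prop := fun x a y =>
  ∃ (ρ : FinRen) (q q' : A.Q) (b : Atom),
    x = Quot.mk _ (ρ, q) ∧ y = Quot.mk _ (ρ, q') ∧ a = ρ.1 b ∧ A.δ q b q'

def IB : Set (QB A) := {x | ∃ (ρ : FinRen) (q : A.Q), x = Quot.mk _ (ρ, q) ∧ q ∈ A.I}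

def FB : Set (QB A) := {x | ∃ (ρ : FinRen) (q : A.Q), x = Quot.mk _ (ρ, q) ∧ q ∈ A.F}

variable {A}

lemma smulB_one : ∀ x : QB A, smulB A 1 x = x := by
  apply Quot.ind
  intro p
  rw [smulB_mk, one_mul]

lemma smulB_mul (ρ σ : FinRen) : ∀ x : QB A, smulB A (ρ * σ) x = smulB A ρ (smulB A σ x) := by
  apply Quot.ind
  intro p
  rw [smulB_mk, smulB_mk, smulB_mk, mul_assoc]

lemma nominalB : ∀ x : QB A, ∃ S : Set Atom, S.Finite ∧
    ∀ ρ σ : FinRen, (∀ a ∈ S, ρ.1 a = σ.1 a) → smulB A ρ x = smulB A σ x := by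
  apply Quot.ind
  rintro ⟨ρ₀, q⟩
  refine ⟨ρ₀.1 '' SOF q, (SOF_finite q).image _, ?_⟩
  intro ρ σ hag
  rw [smulB_mk, smulB_mk]
  apply Quot.sound
  refine ⟨1, (A.one_smul q).symm, fun a ha => ?_⟩
  show ρ.1 (ρ₀.1 a) = σ.1 (ρ₀.1 ((1 : FinPerm).1 a))
  have h1 : ((1 : FinPerm) : Equiv.Perm Atom) a = a := rfl
  rw [h1]
  exact hag (ρ₀.1 a) ⟨a, ha, rfl⟩

lemma equiv_δB (ρ : FinRen) (x : QB A) (a : Atom) (y : QB A) (h : δB A x a y) :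
    δB A (smulB A ρ x) (ρ.1 a) (smulB A ρ y) := by
  obtain ⟨ρ₀, q, q', b, hx, hy, hab, hδ⟩ := h
  refine ⟨ρ * ρ₀, q, q', b, ?_, ?_, ?_, hδ⟩
  · rw [hx, smulB_mk]
  · rw [hy, smulB_mk]
  · show ρ.1 a = ρ.1 (ρ₀.1 b)
    rw [hab]

lemma equiv_IB (ρ : FinRen) : ∀ x ∈ IB A, smulB A ρ x ∈ IB A := by
  rintro x ⟨ρ₀, q, hx, hq⟩
  exact ⟨ρ * ρ₀, q, by rw [hx, smulB_mk], hq⟩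

lemma equiv_FB (ρ : FinRen) : ∀ x ∈ FB A, smulB A ρ x ∈ FB A := by
  rintro x ⟨ρ₀, q, hx, hq⟩
  exact ⟨ρ * ρ₀, q, by rw [hx, smulB_mk], hq⟩

/-- finitely many orbits -/
lemma orbitFiniteB :
    Finite (Quot fun x y : QB A =>
      ∃ ρ : FinRen, Function.Bijective (ρ : Function.End Atom) ∧ smulB A ρ x = y) := by
  classical
  set rA : A.Q → A.Q → Prop := fun q q' => ∃ π : FinPerm, A.smul π q = q' with hrA
  have hApre : Finite (Quot rA) := A.orbitFinite
  have hrAequiv : Equivalence rA := by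
    constructor
    · intro q; exact ⟨1, A.one_smul q⟩
    · rintro q q' ⟨π, h⟩
      exact ⟨π⁻¹, by rw [← h, nsmul_inv_smul]⟩
    · rintro q q' q'' ⟨π, h⟩ ⟨σ, h'⟩
      exact ⟨σ * π, by rw [A.mul_smul, h, h']⟩
  set rB : Quot (Rel0 A) → Quot (Rel0 A) → Prop := fun x y =>
    ∃ ρ : FinRen, Function.Bijective (ρ : Function.End Atom) ∧ smulB A ρ x = y with hrB
  show Finite (Quot rB)
  set SFin : A.Q → Finset Atom := fun q => (SOF_finite q).toFinset with hSFin
  set T := (c : Quot rA) × ({a // a ∈ SFin (Quot.out c)} → {a // a ∈ SFin (Quot.out c)})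
    with hT
  haveI : Finite T := by
    haveI := hApre
    infer_instance
  set Φ : T → Quot rB := fun ⟨c, e⟩ =>
    Quot.mk rB (Quot.mk (Rel0 A)
      (⟨fun a => if h : a ∈ SFin (Quot.out c) then (e ⟨a, h⟩ : Atom) else a, by
          show ({a | _ ≠ a} : Set Atom).Finite
          refine Set.Finite.subset (SFin (Quot.out c)).finite_toSet ?_
          intro a ha
          simp only [Set.mem_setOf_eq] at ha
          by_contra hmem
          rw [dif_neg (fun h => hmem (Finset.mem_coe.mpr h))] at ha
          exact ha rfl⟩,
        Quot.out c)) with hΦ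
  refine Finite.of_surjective Φ ?_
  intro y
  obtain ⟨x, rfl⟩ := Quot.exists_rep y
  obtain ⟨p, rfl⟩ := Quot.exists_rep x
  obtain ⟨ρ, q⟩ := p
  set c : Quot rA := Quot.mk rA q with hc
  set q₀ : A.Q := Quot.out c with hq₀
  have hmkeq : Quot.mk rA q = Quot.mk rA q₀ := (Quot.out_eq c).symm
  have hrel : rA q q₀ := (hrAequiv.eqvGen_iff).mp (Quot.eq.mp hmkeq)
  obtain ⟨π, hπ⟩ := hrel
  set ρ₁ : FinRen := ρ * pEmb π⁻¹ with hρ₁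
  have step1 : Quot.mk (Rel0 A) (ρ, q) = Quot.mk (Rel0 A) (ρ₁, q₀) := by
    apply Quot.sound
    refine ⟨π, hπ.symm, fun a ha => ?_⟩
    show ρ.1 a = ρ.1 ((π⁻¹ : FinPerm).1 (π.1 a))
    have : (π⁻¹ : FinPerm).1 (π.1 a) = a := Equiv.Perm.inv_apply_self π.1 a
    rw [this]
  -- normalization of values
  have hρ₁V : ∀ a ∈ SFin q₀, ρ₁.1 a ∈ (SFin q₀).image ρ₁.1 := fun a ha =>
    Finset.mem_image_of_mem _ ha
  have hne : ∀ v ∈ (SFin q₀).image ρ₁.1,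
      ((SFin q₀).filter (fun x => ρ₁.1 x = v)).Nonempty := by
    intro v hv
    obtain ⟨a, ha, rfl⟩ := Finset.mem_image.mp hv
    exact ⟨a, Finset.mem_filter.mpr ⟨ha, rfl⟩⟩
  set j : Atom → Atom := fun v =>
    if h : ((SFin q₀).filter (fun x => ρ₁.1 x = v)).Nonempty then
      ((SFin q₀).filter (fun x => ρ₁.1 x = v)).min' h else v with hj
  have hjval : ∀ v, (h : ((SFin q₀).filter (fun x => ρ₁.1 x = v)).Nonempty) →
      j v ∈ SFin q₀ ∧ ρ₁.1 (j v) = v := by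
    intro v h
    have hmem := Finset.min'_mem _ h
    have := Finset.mem_filter.mp hmem
    constructor
    · simp only [hj]; rw [dif_pos h]; exact this.1
    · simp only [hj]; rw [dif_pos h]; exact this.2
  have hjinj : Set.InjOn j ((SFin q₀).image ρ₁.1 : Set Atom) := by
    intro v₁ hv₁ v₂ hv₂ heq
    have h₁ := hjval v₁ (hne v₁ (by exact_mod_cast hv₁))
    have h₂ := hjval v₂ (hne v₂ (by exact_mod_cast hv₂))
    rw [← h₁.2, ← h₂.2, heq]
  obtain ⟨σ, hσ⟩ := exists_finperm_extend ((SFin q₀).image ρ₁.1) j hjinj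
  have step2 : Quot.mk rB (Quot.mk (Rel0 A) (ρ₁, q₀)) =
      Quot.mk rB (Quot.mk (Rel0 A) (pEmb σ * ρ₁, q₀)) := by
    apply Quot.sound
    exact ⟨pEmb σ, σ.1.bijective, rfl⟩
  -- the normal form data
  set e : {a // a ∈ SFin q₀} → {a // a ∈ SFin q₀} := fun a =>
    ⟨j (ρ₁.1 a.1), (hjval _ (hne _ (hρ₁V a.1 a.2))).1⟩ with he
  have step3 : Quot.mk (Rel0 A) (pEmb σ * ρ₁, q₀) =
      Quot.mk (Rel0 A)
        (⟨fun a => if h : a ∈ SFin q₀ then (e ⟨a, h⟩ : Atom) else a, by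
          show ({a | _ ≠ a} : Set Atom).Finite
          refine Set.Finite.subset (SFin q₀).finite_toSet ?_
          intro a ha
          simp only [Set.mem_setOf_eq] at ha
          by_contra hmem
          rw [dif_neg (fun h => hmem (Finset.mem_coe.mpr h))] at ha
          exact ha rfl⟩, q₀) := by
    apply Quot.sound
    refine ⟨1, (A.one_smul q₀).symm, fun a ha => ?_⟩
    have haF : a ∈ SFin q₀ := (SOF_finite q₀).mem_toFinset.mpr ha
    have h1 : ((1 : FinPerm) : Equiv.Perm Atom) a = a := rfl
    show σ.1 (ρ₁.1 a) = _
    rw [h1]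
    show σ.1 (ρ₁.1 a) = (if h : a ∈ SFin q₀ then (e ⟨a, h⟩ : Atom) else a)
    rw [dif_pos haF, hσ _ (hρ₁V a haF)]
  refine ⟨⟨c, e⟩, ?_⟩
  show Quot.mk rB (Quot.mk (Rel0 A) _) = _
  rw [← step3, ← step2, ← step1]

/-- The constructed NOFRA. -/
noncomputable def toNOFRA (A : NOFA) : NOFRA where
  Q := QB A
  smul := fun ρ => smulB A ρ
  one_smul := smulB_one
  mul_smul := smulB_mul
  nominal := nominalB
  orbitFinite := orbitFiniteB
  δ := δB A
  I := IB A
  F := FB A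
  equiv_δ := equiv_δB
  equiv_I := equiv_IB
  equiv_F := equiv_FB

end Construction

section GoodSec

variable {A : NOFA}

/-- the invariant tracked along runs of the constructed NOFRA -/
def Good (A : NOFA) (p : FinRen × A.Q) (w : List Atom) : Prop :=
  ∃ (S : Set Atom) (τ : Atom → Atom) (v : List Atom),
    S.Finite ∧ Supp A S p.2 ∧ IsRenaming τ ∧ (∀ a ∈ S, τ a = p.1.1 a) ∧
    Accepts A.δ A.F p.2 v ∧ w = v.map τ

lemma good_sub {p : FinRen × A.Q} {w : List Atom} (h : Good A p w) {S₀ : Set Atom}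
    (hfin : S₀.Finite) (hsupp : Supp A S₀ p.2) :
    ∃ (S : Set Atom) (τ : Atom → Atom) (v : List Atom), S ⊆ S₀ ∧ S.Finite ∧ Supp A S p.2 ∧
      IsRenaming τ ∧ (∀ a ∈ S, τ a = p.1.1 a) ∧ Accepts A.δ A.F p.2 v ∧ w = v.map τ := by
  obtain ⟨S₁, τ₁, v₁, hf₁, hs₁, hren₁, hag₁, hacc₁, hw₁⟩ := h
  have hsupp' : Supp A (S₁ ∩ S₀) p.2 := supp_inter hs₁ hsupp hf₁ hfin
  obtain ⟨v₂, g, hgren, hacc₂, hmap, hfix, _⟩ :=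
    normalizeRun v₁ p.2 (S₁ ∩ S₀) ∅ hacc₁ (hf₁.inter_of_left _) hsupp' Set.finite_empty
  refine ⟨S₁ ∩ S₀, τ₁ ∘ g, v₂, Set.inter_subset_right, hf₁.inter_of_left _, hsupp',
    isRenaming_comp hren₁ hgren, ?_, hacc₂, ?_⟩
  · intro a ha
    have hga : g a = a := hfix a (Set.mem_union_left _ ha)
    show τ₁ (g a) = _
    rw [hga]
    exact hag₁ a ha.1
  · rw [hw₁, ← hmap, List.map_map]

lemma good_resp {p p' : FinRen × A.Q} (h : Rel0 A p p') (w : List Atom) :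
    Good A p w ↔ Good A p' w := by
  obtain ⟨ρ, q⟩ := p
  obtain ⟨ρ', q'⟩ := p'
  obtain ⟨π, hq, hag⟩ := h
  simp only at hq hag
  constructor
  · intro hg
    obtain ⟨S, τ, v, hsub, hfin, hsupp, hren, hagr, hacc, hw⟩ :=
      good_sub hg (SOF_finite q) (SOF_supp q)
    refine ⟨π.1 '' S, τ ∘ ⇑π.1⁻¹, v.map π.1, hfin.image _, ?_, ?_, ?_, ?_, ?_⟩
    · rw [hq]; exact hsupp.smul π
    · exact isRenaming_comp hren (isRenaming_inv π)
    · rintro a' ⟨a, ha, rfl⟩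
      show τ (π.1⁻¹ (π.1 a)) = ρ'.1 (π.1 a)
      rw [Equiv.Perm.inv_apply_self, hagr a ha]
      exact hag a (hsub ha)
    · rw [hq]; exact accepts_smul_nofa A π v q hacc
    · rw [hw, List.map_map]
      congr 1
      funext a
      show τ a = τ (π.1⁻¹ (π.1 a))
      rw [Equiv.Perm.inv_apply_self]
  · intro hg
    have hsupp₀ : Supp A (π.1 '' SOF q) q' := by rw [hq]; exact (SOF_supp q).smul π
    obtain ⟨S'', τ'', v'', hsub, hfin, hsupp, hren, hagr, hacc, hw⟩ :=
      good_sub hg ((SOF_finite q).image _) hsupp₀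
    have hq' : A.smul π⁻¹ q' = q := by rw [hq, nsmul_inv_smul]
    refine ⟨⇑π.1⁻¹ '' S'', τ'' ∘ ⇑π.1, v''.map ⇑π.1⁻¹, hfin.image _, ?_, ?_, ?_, ?_, ?_⟩
    · have := hsupp.smul π⁻¹
      rw [hq'] at this
      exact this
    · exact isRenaming_comp hren (finPerm_isRenaming π)
    · rintro a' ⟨a, ha, rfl⟩
      show τ'' (π.1 (π.1⁻¹ a)) = ρ.1 (π.1⁻¹ a)
      rw [Equiv.Perm.apply_inv_self]
      have haS : π.1⁻¹ a ∈ SOF q := by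
        obtain ⟨u, hu, rfl⟩ := hsub ha
        rwa [Equiv.Perm.inv_apply_self]
      rw [hagr a ha, hag _ haS, Equiv.Perm.apply_inv_self]
    · have := accepts_smul_nofa A π⁻¹ v'' q' hacc
      rwa [hq'] at this
    · rw [hw, List.map_map]
      congr 1
      funext a
      show τ'' a = τ'' (π.1 (π.1⁻¹ a))
      rw [Equiv.Perm.apply_inv_self]

def GoodQ (A : NOFA) (x : QB A) (w : List Atom) : Prop :=
  Quot.lift (fun p => Good A p w) (fun _ _ h => propext (good_resp h w)) x

lemma main_accepts : ∀ (w : List Atom) (x : QB A),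
    Accepts (δB A) (FB A) x w → GoodQ A x w := by
  intro w
  induction w with
  | nil =>
    intro x hacc
    obtain ⟨ρ, q, rfl, hq⟩ := (hacc : x ∈ FB A)
    show Good A (ρ, q) []
    exact ⟨SOF q, ρ.1, [], SOF_finite q, SOF_supp q, ρ.2, fun a _ => rfl, hq, rfl⟩
  | cons a w ih =>
    intro x hacc
    classical
    obtain ⟨y, hδ, hacc'⟩ := hacc
    obtain ⟨ρ, q, q', b, rfl, hy, hab, hAδ⟩ := hδ
    subst hy
    have hGood' : Good A (ρ, q') w := ih _ hacc'
    obtain ⟨S', τ', v', hf', hs', hren', hag', haccA, hw⟩ := hGood'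
    obtain ⟨v₂, g, hgren, hacc₂, hmap, hfix, hlet⟩ :=
      normalizeRun v' q' S' (SOF q ∪ {b}) haccA hf' hs'
        ((SOF_finite q).union (Set.finite_singleton b))
    set τ : Atom → Atom := fun z =>
      if z ∈ v₂ then τ' (g z) else if z = b then ρ.1 b else ρ.1 z with hτ
    have hτletters : ∀ z ∈ v₂, τ z = τ' (g z) := by
      intro z hz
      simp only [hτ]
      rw [if_pos hz]
    have hτb : τ b = ρ.1 b := by
      by_cases hbv : b ∈ v₂
      · rw [hτletters b hbv]
        have hbS' : b ∈ S' := by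
          rcases hlet b hbv with h | h
          · exact h
          · exact absurd (Set.mem_union_right _ rfl) h
        rw [hfix b (Set.mem_union_left _ hbS'), hag' b hbS']
      · simp only [hτ]
        rw [if_neg hbv]
        simp
    show Good A (ρ, q) (a :: w)
    refine ⟨SOF q, τ, b :: v₂, SOF_finite q, SOF_supp q, ?_, ?_, ⟨q', hAδ, hacc₂⟩, ?_⟩
    · -- IsRenaming τ
      show ({z | τ z ≠ z} : Set Atom).Finite
      refine Set.Finite.subset ((v₂.finite_toSet.union (Set.finite_singleton b)).union ρ.2) ?_
      intro z hz
      simp only [Set.mem_setOf_eq] at hz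
      by_contra hmem
      simp only [Set.mem_union, Set.mem_setOf_eq, Set.mem_singleton_iff, List.mem_toFinset]
        at hmem
      push_neg at hmem
      apply hz
      simp only [hτ]
      rw [if_neg hmem.1.1, if_neg hmem.1.2]
      exact hmem.2
    · -- agreement on SOF q
      intro z hzS
      by_cases hzv : z ∈ v₂
      · rw [hτletters z hzv]
        have hzS' : z ∈ S' := by
          rcases hlet z hzv with h | h
          · exact h
          · exact absurd (Set.mem_union_left _ hzS) h
        rw [hfix z (Set.mem_union_left _ hzS'), hag' z hzS']
      · simp only [hτ]
        rw [if_neg hzv]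
        by_cases hzb : z = b
        · rw [if_pos hzb, hzb]
        · rw [if_neg hzb]
    · -- word equation
      simp only [List.map_cons, hτb, ← hab]
      congr 1
      rw [hw, ← hmap, List.map_map]
      exact List.map_congr_left (fun z hz => (hτletters z hz).symm) |>.symm ▸ rfl

end GoodSec

section LangEq

variable {A : NOFA}

lemma accepts_lift : ∀ (v : List Atom) (q : A.Q), Accepts A.δ A.F q v →
    Accepts (δB A) (FB A) (Quot.mk (Rel0 A) ((1 : FinRen), q)) v := by
  intro v
  induction v with
  | nil =>
    intro q h
    exact ⟨1, q, rfl, h⟩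
  | cons a w ih =>
    intro q h
    obtain ⟨q', hδ, hacc⟩ := h
    exact ⟨Quot.mk (Rel0 A) ((1 : FinRen), q'),
      ⟨1, q, q', a, rfl, rfl, rfl, hδ⟩, ih q' hacc⟩

lemma toNOFRA_lang (A : NOFA) (L : Set (List Atom)) (hpos : Positive L)
    (hA : A.lang = L) : (toNOFRA A).lang = L := by
  apply Set.eq_of_subset_of_subset
  · intro w hw
    obtain ⟨x₀, hI, hacc⟩ := hw
    obtain ⟨ρ, q₀, rfl, hq₀⟩ := hI
    have hGood : Good A (ρ, q₀) w := main_accepts w _ hacc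
    obtain ⟨S, τ, v, _, _, hτren, _, haccv, hweq⟩ := hGood
    have hv : v ∈ L := by
      rw [← hA]
      exact ⟨q₀, hq₀, haccv⟩
    rw [hweq]
    exact hpos τ hτren v hv
  · intro w hw
    rw [← hA] at hw
    obtain ⟨q₀, hI, hacc⟩ := hw
    exact ⟨Quot.mk (Rel0 A) ((1 : FinRen), q₀), ⟨1, q₀, rfl, hI⟩, accepts_lift w q₀ hacc⟩

end LangEq

section EasyDir

/-- The NOFA underlying a NOFRA. -/
def toNOFA (B : NOFRA) : NOFA where
  Q := B.Q
  smul := fun π q => B.smul (pEmb π) q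
  one_smul := fun q => B.one_smul q
  mul_smul := fun π σ q => B.mul_smul (pEmb π) (pEmb σ) q
  nominal := fun q => by
    obtain ⟨S, hfin, hS⟩ := B.nominal q
    exact ⟨S, hfin, fun π σ h => hS (pEmb π) (pEmb σ) h⟩
  orbitFinite := by
    have h : (fun q q' : B.Q => ∃ π : FinPerm, B.smul (pEmb π) q = q') =
        (fun q q' : B.Q => ∃ ρ : FinRen,
          Function.Bijective (ρ : Function.End Atom) ∧ B.smul ρ q = q') := by
      funext q q'
      apply propext
      constructor
      · rintro ⟨π, h⟩
        exact ⟨pEmb π, π.1.bijective, h⟩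
      · rintro ⟨ρ, hb, h⟩
        have hmem : Equiv.ofBijective (ρ.1 : Atom → Atom) hb ∈ FinPerm := by
          show ({a | Equiv.ofBijective (ρ.1 : Atom → Atom) hb a ≠ a} : Set Atom).Finite
          exact ρ.2
        refine ⟨⟨Equiv.ofBijective (ρ.1 : Atom → Atom) hb, hmem⟩, ?_⟩
        have heq : pEmb ⟨Equiv.ofBijective (ρ.1 : Atom → Atom) hb, hmem⟩ = ρ :=
          Subtype.ext rfl
        rw [heq]
        exact h
    rw [h]
    exact B.orbitFinite
  δ := B.δ
  I := B.I
  F := B.F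
  equiv_δ := fun π q a q' h => B.equiv_δ (pEmb π) q a q' h
  equiv_I := fun π q h => B.equiv_I (pEmb π) q h
  equiv_F := fun π q h => B.equiv_F (pEmb π) q h

lemma toNOFA_lang (B : NOFRA) : (toNOFA B).lang = B.lang := rfl

lemma nofra_positive (B : NOFRA) : Positive B.lang := by
  intro ρfun hren w hw
  obtain ⟨q₀, hI, hacc⟩ := hw
  have hmem : ρfun ∈ FinRen := hren
  exact ⟨B.smul ⟨ρfun, hmem⟩ q₀, B.equiv_I _ _ hI,
    accepts_smul_nofra B ⟨ρfun, hmem⟩ w q₀ hacc⟩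

end EasyDir

/-- a data language is NOFRA-recognizable iff it is positive
and NOFA-recognizable. -/
theorem nofra_recognizable_iff_positive_nofa (L : Set (List Atom)) :
    (∃ A : NOFRA, A.lang = L) ↔ (Positive L ∧ ∃ A : NOFA, A.lang = L) := by
  constructor
  · rintro ⟨B, rfl⟩
    exact ⟨nofra_positive B, toNOFA B, toNOFA_lang B⟩
  · rintro ⟨hpos, A, hA⟩
    exact ⟨toNOFRA A, toNOFRA_lang A L hpos hA⟩
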